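/- Let n ≥ 3 and let α₁, …, αₙ ∈ ℤ² be primitive vectors with det(αᵢ, αᵢ₊₁) = ±1 for all i, indices taken cyclically mod n. Then there exist a matrix A ∈ SL(2,ℤ), an index j (mod n), and signs ε₁, ε₂ ∈ {1, −1} such that A·α_j = ε₁·(0,1), A·α_{j+1} = ε₂·(1,0), and A·α_{j+2} is one of (1,1), (−1,−1), (−1,1), (1,−1), (0,1), (0,−1). (Every loop in the Farey graph with n ≥ 3 edges is conjugate, up to cyclic re-indexing, to a loop whose first three vertices are (0/1, 1/0, 1/1), (0/1, 1/0, −1/1), or (0/1, 1/0, 0/1).) -/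

import Mathlib

/-- The determinant pairing on `ℤ²`. -/
def dett (u v : ℤ × ℤ) : ℤ := u.1 * v.2 - u.2 * v.1

/-- The action of a `2 × 2` integer matrix on `ℤ²`. -/
def matAct (A : Matrix (Fin 2) (Fin 2) ℤ) (v : ℤ × ℤ) : ℤ × ℤ :=
  (A 0 0 * v.1 + A 0 1 * v.2, A 1 0 * v.1 + A 1 1 * v.2)

/-- Plücker relation for the determinant pairing. -/
lemma pluecker (t u v w : ℤ × ℤ) :
    dett u v * dett t w = dett w v * dett t u + dett u w * dett t v := by
  simp only [dett]; ring

lemma step_ineq (x y z d a b : ℤ) (hd : d = 1 ∨ d = -1) (ha : a = 1 ∨ a = -1)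
    (hb : b ≤ -2 ∨ 2 ≤ b) (hid : d * z = a * x + b * y) (hxy : |x| < |y|) :
    |y| < |z| := by
  have h1 : |a * x + b * y| = |z| := by
    rw [← hid]; rcases hd with h | h <;> subst h <;> simp [abs_mul]
  have h2 : |b * y| - |a * x| ≤ |a * x + b * y| := by
    have h := abs_sub_abs_le_abs_sub (b * y) (-(a * x))
    simp only [abs_neg, sub_neg_eq_add] at h
    calc |b * y| - |a * x| ≤ |b * y + a * x| := h
      _ = |a * x + b * y| := by rw [add_comm]
  have h3 : |a * x| = |x| := by rcases ha with h | h <;> subst h <;> simp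
  have h4 : 2 * |y| ≤ |b * y| := by
    rw [abs_mul]
    have hy := abs_nonneg y
    have hb2 : 2 ≤ |b| := by
      rcases hb with h | h
      · have := neg_le_abs b; linarith
      · have := le_abs_self b; linarith
    nlinarith
  have hx := abs_nonneg x
  linarith

theorem farey_loop_normal_form (n : ℕ) (hn : 3 ≤ n) (α : ℕ → ℤ × ℤ)
    (hprim : ∀ i < n, IsCoprime (α i).1 (α i).2)
    (hdet : ∀ i < n, dett (α i) (α ((i + 1) % n)) = 1 ∨
      dett (α i) (α ((i + 1) % n)) = -1) :
    ∃ A : Matrix (Fin 2) (Fin 2) ℤ, A.det = 1 ∧ ∃ j < n, ∃ ε₁ ε₂ : ℤ,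
      (ε₁ = 1 ∨ ε₁ = -1) ∧ (ε₂ = 1 ∨ ε₂ = -1) ∧
      matAct A (α j) = ε₁ • ((0 : ℤ), (1 : ℤ)) ∧
      matAct A (α ((j + 1) % n)) = ε₂ • ((1 : ℤ), (0 : ℤ)) ∧
      matAct A (α ((j + 2) % n)) ∈
        ({(1, 1), (-1, -1), (-1, 1), (1, -1), (0, 1), (0, -1)} : Set (ℤ × ℤ)) := by
  rcases Classical.em (∃ j, j < n ∧ (dett (α j) (α ((j + 2) % n)) = -1 ∨
      dett (α j) (α ((j + 2) % n)) = 0 ∨ dett (α j) (α ((j + 2) % n)) = 1)) with hex | hnone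
  · -- a good triple exists: construct the normalizing matrix
    obtain ⟨j, hj, hw⟩ := hex
    set u := α j with hu'
    set v := α ((j + 1) % n) with hv'
    set w := α ((j + 2) % n) with hw'
    have hd : dett u v = 1 ∨ dett u v = -1 := hdet j hj
    have he : dett v w = 1 ∨ dett v w = -1 := by
      have h := hdet ((j + 1) % n) (Nat.mod_lt _ (by omega))
      rwa [Nat.mod_add_mod] at h
    refine ⟨![![dett u v * u.2, -(dett u v) * u.1], ![v.2, -v.1]], ?_, j, hj,
      dett u v, -1, hd, Or.inr rfl, ?_, ?_, ?_⟩
    · refine (Matrix.det_fin_two _).trans ?_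
      simp only [Matrix.cons_val', Matrix.cons_val_zero, Matrix.cons_val_one,
        Matrix.head_cons, Matrix.empty_val', Matrix.cons_val_fin_one, Matrix.head_fin_const]
      rcases hd with h | h <;> rw [h] <;> simp only [dett] at h
      · linear_combination h
      · linear_combination -h
    · simp only [matAct, dett, Matrix.cons_val', Matrix.cons_val_zero, Matrix.cons_val_one,
        Matrix.head_cons, Matrix.empty_val', Matrix.cons_val_fin_one, Matrix.head_fin_const,
        Prod.smul_mk, smul_eq_mul, Prod.mk.injEq]
      constructor <;> ring
    · have : matAct ![![dett u v * u.2, -(dett u v) * u.1], ![v.2, -v.1]] v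
          = (dett u v * dett u v * (-1), 0) := by
        simp only [matAct, dett, Matrix.cons_val', Matrix.cons_val_zero, Matrix.cons_val_one,
          Matrix.head_cons, Matrix.empty_val', Matrix.cons_val_fin_one, Matrix.head_fin_const,
          Prod.mk.injEq]
        constructor <;> ring
      rw [this]
      rcases hd with h | h <;> rw [h] <;> norm_num
    · have heq : matAct ![![dett u v * u.2, -(dett u v) * u.1], ![v.2, -v.1]] w
          = (-(dett u v) * dett u w, -(dett v w)) := by
        simp only [matAct, dett, Matrix.cons_val', Matrix.cons_val_zero, Matrix.cons_val_one,
          Matrix.head_cons, Matrix.empty_val', Matrix.cons_val_fin_one, Matrix.head_fin_const,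
          Prod.mk.injEq]
        constructor <;> ring
      rw [heq]
      rcases hd with h1 | h1 <;> rcases he with h2 | h2 <;>
        rcases hw with h3 | h3 | h3 <;> rw [h1, h2, h3] <;> norm_num
  · -- otherwise derive a contradiction via growth of determinants
    exfalso
    have hB : ∀ j, j < n → dett (α j) (α ((j + 2) % n)) ≤ -2 ∨
        2 ≤ dett (α j) (α ((j + 2) % n)) := by
      intro j hj
      by_contra h
      exact hnone ⟨j, hj, by omega⟩
    set c : ℕ → ℤ := fun j => dett (α 0) (α (j % n)) with hc
    have key : ∀ j, j + 1 ≤ n → |c j| < |c (j + 1)| := by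
      intro j
      induction j with
      | zero =>
        intro _
        have h0 : c 0 = 0 := by
          show dett (α 0) (α (0 % n)) = 0
          simp only [Nat.zero_mod, dett]; ring
        have h1 : c 1 = dett (α 0) (α 1) := by
          simp [hc, Nat.mod_eq_of_lt (show 1 < n by omega)]
        have := hdet 0 (by omega)
        rw [show (0 + 1) % n = 1 from Nat.mod_eq_of_lt (by omega)] at this
        rw [h0, h1]
        rcases this with h | h <;> rw [h] <;> norm_num
      | succ j ih =>
        intro hjn
        have hj1 : j + 1 < n := by omega
        have hj0 : j < n := by omega
        have ihh := ih (by omega)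
        have hid := pluecker (α 0) (α j) (α (j + 1)) (α ((j + 2) % n))
        have hcj : c j = dett (α 0) (α j) := by
          simp [hc, Nat.mod_eq_of_lt hj0]
        have hcj1 : c (j + 1) = dett (α 0) (α (j + 1)) := by
          simp [hc, Nat.mod_eq_of_lt hj1]
        have hcj2 : c (j + 2) = dett (α 0) (α ((j + 2) % n)) := rfl
        have hd : dett (α j) (α (j + 1)) = 1 ∨ dett (α j) (α (j + 1)) = -1 := by
          have h := hdet j hj0
          rwa [Nat.mod_eq_of_lt hj1] at h
        have he : dett (α (j + 1)) (α ((j + 2) % n)) = 1 ∨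
            dett (α (j + 1)) (α ((j + 2) % n)) = -1 := hdet (j + 1) hj1
        have anti : ∀ x y : ℤ × ℤ, dett x y = -dett y x := by
          intro x y; simp only [dett]; ring
        have ha : dett (α ((j + 2) % n)) (α (j + 1)) = 1 ∨
            dett (α ((j + 2) % n)) (α (j + 1)) = -1 := by
          rw [anti]; omega
        exact step_ineq (c j) (c (j + 1)) (c (j + 2)) _ _ _ hd ha (hB j hj0)
          (by rw [hcj, hcj1, hcj2]; exact hid) ihh
    have grow : ∀ j, j ≤ n → (j : ℤ) ≤ |c j| := by
      intro j
      induction j with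
      | zero => intro _; simpa using abs_nonneg (c 0)
      | succ j ih =>
        intro hjn
        have h1 := ih (by omega)
        have h2 := key j hjn
        push_cast
        linarith
    have hcn : c n = 0 := by
      have : c n = dett (α 0) (α 0) := by simp [hc, Nat.mod_self]
      rw [this]; simp only [dett]; ring
    have h3 := grow n le_rfl
    rw [hcn] at h3
    have h4 : (3 : ℤ) ≤ (n : ℤ) := by exact_mod_cast hn
    simp at h3
    linarith
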